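/- The quotient ring H = ℂ[A,X,Y]/(f) is an integral domain. -/

import Mathlib

open MvPolynomial

set_option maxRecDepth 10000
set_option maxHeartbeats 1000000
set_option synthInstance.maxHeartbeats 400000

noncomputable section

abbrev Rr := MvPolynomial (Fin 2) ℂ
abbrev gg : Rr := X 0 * X 1 * ((X 0)^2 - X 1)

lemma no_sqrt (b : Rr) : b ^ 2 ≠ gg := by
  intro h
  have hφ := congrArg (aeval (fun i : Fin 2 => if i = 0 then Polynomial.X else 1 : Fin 2 → Polynomial ℂ)) h
  simp [gg, map_pow] at hφ
  set q := (aeval (fun i : Fin 2 => if i = 0 then Polynomial.X else 1 : Fin 2 → Polynomial ℂ)) b with hq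
  have h3 : (Polynomial.X * (Polynomial.X ^ 2 - 1) : Polynomial ℂ).natDegree = 3 := by
    compute_degree!
  rw [← hφ, Polynomial.natDegree_pow] at h3
  omega

abbrev Kk := FractionRing Rr

lemma no_sqrt_K (b : Kk) : b ^ 2 ≠ algebraMap Rr Kk gg := by
  intro h
  have hint : IsIntegral Rr b := by
    refine ⟨Polynomial.X ^ 2 - Polynomial.C gg, Polynomial.monic_X_pow_sub_C _ (by norm_num), ?_⟩
    simp [Polynomial.eval₂_sub, h]
  obtain ⟨y, hy⟩ := IsIntegrallyClosed.isIntegral_iff.mp hint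
  apply no_sqrt y
  apply IsFractionRing.injective Rr Kk
  rw [map_pow, hy, h]

lemma pp_irred : Irreducible (Polynomial.X ^ 2 - Polynomial.C gg : Polynomial Rr) := by
  rw [(Polynomial.monic_X_pow_sub_C gg (by norm_num)).irreducible_iff_irreducible_map_fraction_map (K := Kk)]
  have : (Polynomial.X ^ 2 - Polynomial.C gg : Polynomial Rr).map (algebraMap Rr Kk)
      = Polynomial.X ^ 2 - Polynomial.C (algebraMap Rr Kk gg) := by
    simp
  rw [this]
  exact X_pow_sub_C_irreducible_of_prime Nat.prime_two (fun b => no_sqrt_K b)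

/-- `H = ℂ[A,X,Y]/(f)` with `f = A² − X·Y·(X² − Y)` is an integral domain.
Variables: `A = X 0`, `X = X 1`, `Y = X 2`. -/
theorem stmt_2 :
    IsDomain (MvPolynomial (Fin 3) ℂ ⧸
      Ideal.span {((X 0) ^ 2 - X 1 * X 2 * ((X 1) ^ 2 - X 2) :
        MvPolynomial (Fin 3) ℂ)}) := by
  rw [Ideal.Quotient.isDomain_iff_prime]
  set f : MvPolynomial (Fin 3) ℂ := (X 0) ^ 2 - X 1 * X 2 * ((X 1) ^ 2 - X 2) with hf
  have hef : finSuccEquiv ℂ 2 f = Polynomial.X ^ 2 - Polynomial.C gg := by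
    have hf2 : f = X 0 ^ 2 - X (Fin.succ 0) * X (Fin.succ 1) *
        (X (Fin.succ 0) ^ 2 - X (Fin.succ 1)) := rfl
    rw [hf2]
    simp only [map_sub, map_mul, map_pow, finSuccEquiv_X_zero, finSuccEquiv_X_succ]
  have hp : Prime f := by
    rw [← MulEquiv.prime_iff (finSuccEquiv ℂ 2).toMulEquiv]
    show Prime (finSuccEquiv ℂ 2 f)
    rw [hef]
    exact pp_irred.prime
  rw [Ideal.span_singleton_prime hp.ne_zero]
  exact hp

end
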